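/- For any (u, v) ∈ ℚ² with (u, v) ≠ (0, 0), the family (K_{u,v}(w)), indexed by all nonempty words w over the alphabet {2,3}, is linearly independent over ℚ in A. Equivalently, the zinbiel subalgebra C_{u,v} of A generated by z_2 and z_3 under the half-shuffle product is a free zinbiel algebra on these two generators. -/

import Mathlib

/-- Words over the alphabet `{0,1}`, encoded with `false` = `0` and `true` = `1`. -/
abbrev Word : Type := List Bool

/-- The ℚ-vector space `A` of finitely supported functions on words over `{0,1}`. -/
abbrev A01 : Type := Word →₀ ℚ

/-- The basis element `δ_x` of `A` attached to a word `x`. -/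
noncomputable def δ (x : Word) : A01 := Finsupp.single x 1

/-- Prepend the letter `a` to every word of a formal sum. -/
noncomputable def prependLetter (a : Bool) (f : A01) : A01 :=
  Finsupp.mapDomain (List.cons a) f

/-- The shuffle product of two words, as an element of `A`. -/
noncomputable def shuffle : Word → Word → A01
  | [], y => δ y
  | a :: x, [] => δ (a :: x)
  | a :: x, b :: y =>
      prependLetter a (shuffle x (b :: y)) + prependLetter b (shuffle (a :: x) y)
  termination_by x y => x.length + y.length

/-- The half-shuffle product on basis words: `δ_{a::x} ≺ δ_y = a·(x ш y)`, `δ_[] ≺ δ_y = 0`. -/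
noncomputable def halfWord : Word → Word → A01
  | [], _ => 0
  | a :: x, y => prependLetter a (shuffle x y)

/-- The half-shuffle (zinbiel) product `≺` on `A`, extended bilinearly from basis words. -/
noncomputable def half (f g : A01) : A01 :=
  f.sum fun x c => g.sum fun y d => (c * d) • halfWord x y

/-- The right-parenthesized product `K(a_1, …, a_n) = a_1 ≺ (a_2 ≺ (⋯ ≺ a_n))`,
with `K(a_n) = a_n`, and `δ_[]` (the shuffle unit) for the empty list. -/
noncomputable def Klist : List A01 → A01
  | [] => δ []
  | [a] => a
  | a :: b :: l => half a (Klist (b :: l))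

/-- The generators `z_2 = δ_{(1,0)}` and `z_3 = u·δ_{(1,0,0)} + v·δ_{(1,1,0)}`;
letters of the alphabet `{2,3}` are encoded with `false` = `2` and `true` = `3`. -/
noncomputable def zgen (u v : ℚ) : Bool → A01
  | false => δ [true, false]
  | true => u • δ [true, false, false] + v • δ [true, true, false]

/-- `K_{u,v}(w)` for a word `w` over `{2,3}` (encoded with `false` = `2`, `true` = `3`). -/
noncomputable def Kuv (u v : ℚ) (w : List Bool) : A01 :=
  Klist (w.map (zgen u v))

/-- The block substitution `2 ↦ (1,0)`, `3 ↦ (1,0,0)`. -/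
def blocks0 (c : Bool) : Word := if c then [true, false, false] else [true, false]

/-- The block substitution `2 ↦ (1,0)`, `3 ↦ (1,1,0)`. -/
def blocks1 (c : Bool) : Word := if c then [true, true, false] else [true, false]

/-- `cat₀(w)`: substitute `2 ↦ (1,0)`, `3 ↦ (1,0,0)` and concatenate. -/
def cat0 (w : List Bool) : Word := (w.map blocks0).flatten

/-- `cat₁(w)`: substitute `2 ↦ (1,0)`, `3 ↦ (1,1,0)` and concatenate. -/
def cat1 (w : List Bool) : Word := (w.map blocks1).flatten

/-- A good-shuffle realizing the word `x` from the words `ws = (w^1, …, w^n)`: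
a partition `S` of the positions of `x`, reading `x` along `S j` gives `w^j`,
and the minima of the parts are in increasing order. -/
def GoodShuffle (ws : List Word) (x : Word)
    (S : Fin ws.length → Finset (Fin x.length)) : Prop :=
  (∀ p : Fin x.length, ∃! j, p ∈ S j) ∧
  (∀ j, ((S j).sort (· ≤ ·)).map x.get = ws.get j) ∧
  (∀ j k, j < k → (S j).min < (S k).min)

/-- The weight of a word over `{2,3}`: the sum of its letters. -/
def wt (w : List Bool) : ℕ := (w.map fun c => if c then 3 else 2).sum

/-! ### Auxiliary: coefficient lemmas -/

lemma delta_apply (x y : Word) : δ x y = if x = y then 1 else 0 := Finsupp.single_apply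

lemma prependLetter_apply_nil (a : Bool) (f : A01) : prependLetter a f [] = 0 := by
  apply Finsupp.mapDomain_notin_range
  rintro ⟨y, hy⟩
  simp at hy

lemma prependLetter_apply_cons (a b : Bool) (f : A01) (z : Word) :
    prependLetter a f (b :: z) = if a = b then f z else 0 := by
  by_cases h : a = b
  · subst h
    simp only [if_pos rfl]
    exact Finsupp.mapDomain_apply (List.cons_injective) f z
  · rw [if_neg h]
    apply Finsupp.mapDomain_notin_range
    rintro ⟨y, hy⟩
    apply h
    exact (List.cons_eq_cons.mp hy).1

lemma shuffle_nil_left (y : Word) : shuffle [] y = δ y := by rw [shuffle]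

lemma shuffle_nil_right (x : Word) : shuffle x [] = δ x := by
  cases x <;> rw [shuffle]

lemma shuffle_cons_cons (a : Bool) (x : Word) (b : Bool) (y : Word) :
    shuffle (a :: x) (b :: y) =
      prependLetter a (shuffle x (b :: y)) + prependLetter b (shuffle (a :: x) y) := by
  rw [shuffle]

lemma shuffle_apply_nil (x y : Word) :
    shuffle x y [] = if x = [] ∧ y = [] then 1 else 0 := by
  match x, y with
  | [], y => rw [shuffle_nil_left, delta_apply]; by_cases h : y = [] <;> simp [h, eq_comm]
  | a :: x, [] => rw [shuffle_nil_right, delta_apply]; simp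
  | a :: x, b :: y =>
      rw [shuffle_cons_cons]
      simp [prependLetter_apply_nil]

lemma shuffle_cons_apply_cons (b : Bool) (t : Word) (y : Word) (a : Bool) (z : Word) :
    shuffle (b :: t) y (a :: z) =
      (if b = a then shuffle t y z else 0) +
      (match y with | [] => (0:ℚ) | c :: y' => if c = a then shuffle (b :: t) y' z else 0) := by
  match y with
  | [] =>
      rw [shuffle_nil_right, delta_apply]
      by_cases hba : b = a
      · subst hba
        rw [shuffle_nil_right, delta_apply]
        by_cases htz : t = z <;> simp [htz]
      · have : (b :: t = a :: z) = False := by simp [hba]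
        simp [this, hba]
  | c :: y' =>
      rw [shuffle_cons_cons, Finsupp.add_apply, prependLetter_apply_cons,
        prependLetter_apply_cons]

/-! ### The coefficient function of a left tail-shuffle -/

/-- `shLc t F x` is the coefficient at the word `x` of the shuffle `δ_t ш f`, where
`F` is the coefficient function of `f`. -/
def shLc : Word → (Word → ℚ) → Word → ℚ
  | t, F, [] => if t = [] then F [] else 0
  | [], F, a :: z => shLc [] (fun y => F (a :: y)) z
  | b :: t, F, a :: z => (if b = a then shLc t F z else 0) + shLc (b :: t) (fun y => F (a :: y)) z

lemma shLc_apply_nil (t : Word) (F : Word → ℚ) : shLc t F [] = if t = [] then F [] else 0 := by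
  cases t <;> rfl

lemma shLc_nil_cons (F : Word → ℚ) (a : Bool) (z : Word) :
    shLc [] F (a :: z) = shLc [] (fun y => F (a :: y)) z := rfl

lemma shLc_cons_cons (b : Bool) (t : Word) (F : Word → ℚ) (a : Bool) (z : Word) :
    shLc (b :: t) F (a :: z) =
      (if b = a then shLc t F z else 0) + shLc (b :: t) (fun y => F (a :: y)) z := rfl

lemma shLc_nil (F : Word → ℚ) : ∀ x, shLc [] F x = F x := by
  intro x
  induction x generalizing F with
  | nil => rfl
  | cons a z ih => rw [shLc_nil_cons, ih]

lemma shLc_congr {F G : Word → ℚ} (h : ∀ y, F y = G y) (t : Word) :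
    ∀ x, shLc t F x = shLc t G x := by
  intro x
  induction x generalizing t F G with
  | nil => rw [shLc_apply_nil, shLc_apply_nil, h]
  | cons a z ih =>
      cases t with
      | nil => rw [shLc_nil_cons, shLc_nil_cons]; exact ih (fun y => h (a :: y)) []
      | cons b t =>
          rw [shLc_cons_cons, shLc_cons_cons, ih h t]
          congr 1
          exact ih (fun y => h (a :: y)) (b :: t)

lemma shLc_zero {F : Word → ℚ} (h : ∀ y, F y = 0) (t : Word) :
    ∀ x, shLc t F x = 0 := by
  intro x
  induction x generalizing t F with
  | nil => rw [shLc_apply_nil, h]; simp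
  | cons a z ih =>
      cases t with
      | nil => rw [shLc_nil_cons]; exact ih (fun y => h (a :: y)) []
      | cons b t =>
          rw [shLc_cons_cons, ih h t]
          rw [ih (fun y => h (a :: y)) (b :: t)]
          simp

lemma shLc_add (F G : Word → ℚ) (t : Word) :
    ∀ x, shLc t (fun y => F y + G y) x = shLc t F x + shLc t G x := by
  intro x
  induction x generalizing t F G with
  | nil => rw [shLc_apply_nil, shLc_apply_nil, shLc_apply_nil]; split <;> simp
  | cons a z ih =>
      cases t with
      | nil => rw [shLc_nil_cons, shLc_nil_cons, shLc_nil_cons]; exact ih _ _ []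
      | cons b t =>
          rw [shLc_cons_cons, shLc_cons_cons, shLc_cons_cons, ih F G t]
          rw [ih (fun y => F (a :: y)) (fun y => G (a :: y)) (b :: t)]
          split <;> ring

lemma shLc_smul (c : ℚ) (F : Word → ℚ) (t : Word) :
    ∀ x, shLc t (fun y => c * F y) x = c * shLc t F x := by
  intro x
  induction x generalizing t F with
  | nil => rw [shLc_apply_nil, shLc_apply_nil]; split <;> simp
  | cons a z ih =>
      cases t with
      | nil => rw [shLc_nil_cons, shLc_nil_cons]; exact ih _ []
      | cons b t =>
          rw [shLc_cons_cons, shLc_cons_cons, ih F t]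
          rw [ih (fun y => F (a :: y)) (b :: t)]
          split <;> ring

lemma shLc_delta (c : ℚ) : ∀ (x t y : Word),
    shLc t (fun w => if y = w then c else 0) x = c * shuffle t y x := by
  intro x
  induction x with
  | nil =>
      intro t y
      rw [shLc_apply_nil, shuffle_apply_nil]
      cases t with
      | nil => by_cases hy : y = [] <;> simp [hy, eq_comm]
      | cons b t => simp
  | cons a z ih =>
      intro t y
      cases t with
      | nil =>
          rw [shLc_nil_cons, shuffle_nil_left, delta_apply]
          cases y with
          | nil =>
              rw [shLc_zero (t := []) (fun w => by simp)]
              simp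
          | cons c' y' =>
              by_cases hca : c' = a
              · subst hca
                have : ∀ w, (if c' :: y' = c' :: w then c else 0)
                    = (if y' = w then c else 0) := by intro w; simp
                rw [shLc_congr this, ih [] y', shuffle_nil_left, delta_apply]
                by_cases h : y' = z <;> simp [h]
              · rw [shLc_zero (t := []) (fun w => by simp [List.cons_eq_cons, hca])]
                have : (c' :: y' = a :: z) = False := by simp [hca]
                simp [this]
      | cons b t =>
          cases y with
          | nil =>
              rw [shLc_cons_cons, shuffle_cons_apply_cons]
              rw [shLc_zero (t := b :: t) (fun w => by simp)]
              by_cases hba : b = a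
              · rw [if_pos hba, if_pos hba, ih t ([] : Word)]
                show c * shuffle t [] z + 0 = c * (shuffle t [] z + 0)
                ring
              · rw [if_neg hba, if_neg hba]
                show (0:ℚ) + 0 = c * (0 + 0)
                ring
          | cons c' y' =>
              rw [shLc_cons_cons, shuffle_cons_apply_cons]
              by_cases hca : c' = a
              · subst hca
                have heq : ∀ w, ((if c' :: y' = c' :: w then c else 0) : ℚ)
                    = (if y' = w then c else 0) := fun w => by simp
                rw [shLc_congr heq (b :: t) z, ih (b :: t) y']
                by_cases hba : b = c' <;> simp [hba, ih t (c' :: y')] <;> ring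
              · rw [shLc_zero (t := b :: t) (fun w => by simp [List.cons_eq_cons, hca]) z]
                by_cases hba : b = a <;> simp [hba, hca, ih t (c' :: y')]

/-! ### Bridge between `Finsupp` level and coefficient level -/

/-- Tail-shuffle at the `Finsupp` level: `δ_t ш g`. -/
noncomputable def shL (t : Word) (g : A01) : A01 := g.sum fun y d => d • shuffle t y

lemma shL_apply (t : Word) (g : A01) (x : Word) : shL t g x = shLc t (⇑g) x := by
  induction g using Finsupp.induction with
  | zero =>
      rw [shL, Finsupp.sum_zero_index]
      rw [shLc_zero (t := t) (F := ⇑(0 : A01)) (fun y => rfl) x]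
      rfl
  | single_add y c g hys hc ih =>
      have hadd : shL t (Finsupp.single y c + g) = c • shuffle t y + shL t g := by
        rw [shL, Finsupp.sum_add_index (by intro i _; simp) (by intro i _ b₁ b₂; rw [add_smul]),
          Finsupp.sum_single_index (by simp), ← shL]
      rw [hadd]
      have hcoe : ∀ w, (⇑(Finsupp.single y c + g)) w
          = (fun w' => if y = w' then c else 0) w + (⇑g) w := by
        intro w
        rw [Finsupp.add_apply, Finsupp.single_apply]
      rw [shLc_congr hcoe t x, shLc_add _ _ t x, shLc_delta c x t y, ← ih]
      rw [Finsupp.add_apply, Finsupp.smul_apply, smul_eq_mul]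

/-! ### Structure of `Kuv` -/

lemma half_single (a : Bool) (t : Word) (r : ℚ) (g : A01) :
    half (Finsupp.single (a :: t) r) g = r • prependLetter a (shL t g) := by
  rw [half, Finsupp.sum_single_index (by simp)]
  rw [shL, prependLetter, Finsupp.mapDomain_sum, Finsupp.smul_sum]
  apply Finsupp.sum_congr
  intro y _
  rw [Finsupp.mapDomain_smul, ← prependLetter]
  show (r * g y) • prependLetter a (shuffle t y) = r • (g y • prependLetter a (shuffle t y))
  rw [smul_smul]

lemma half_add_left (f₁ f₂ g : A01) : half (f₁ + f₂) g = half f₁ g + half f₂ g := by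
  rw [half, half, half]
  apply Finsupp.sum_add_index
  · intro x _; simp
  · intro x _ b₁ b₂
    rw [← Finsupp.sum_add]
    apply Finsupp.sum_congr
    intro y _
    rw [add_mul, add_smul]

lemma half_smul_left (r : ℚ) (f g : A01) : half (r • f) g = r • half f g := by
  rw [half, half, Finsupp.sum_smul_index (by intro i; simp), Finsupp.smul_sum]
  apply Finsupp.sum_congr
  intro x _
  rw [Finsupp.smul_sum]
  apply Finsupp.sum_congr
  intro y _
  rw [smul_smul, mul_assoc]

lemma Kuv_nil (u v : ℚ) : Kuv u v [] = δ [] := rfl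

lemma shL_delta_nil (t : Word) : shL t (δ []) = shuffle t [] := by
  rw [shL, δ, Finsupp.sum_single_index (by simp), one_smul]

lemma half_delta_nil (u v : ℚ) (a : Bool) : half (zgen u v a) (δ []) = zgen u v a := by
  cases a with
  | false =>
      show half (Finsupp.single [true, false] 1) (δ []) = δ [true, false]
      rw [half_single, shL_delta_nil, shuffle_nil_right, one_smul]
      rw [prependLetter, δ, Finsupp.mapDomain_single]
      rfl
  | true =>
      show half (u • Finsupp.single [true, false, false] 1
          + v • Finsupp.single [true, true, false] 1) (δ []) = zgen u v true
      rw [half_add_left, half_smul_left, half_smul_left, half_single, half_single,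
        shL_delta_nil, shL_delta_nil, shuffle_nil_right, shuffle_nil_right, one_smul, one_smul]
      show u • prependLetter true (δ [false, false]) + v • prependLetter true (δ [true, false])
          = zgen u v true
      rw [prependLetter, prependLetter, δ, δ, Finsupp.mapDomain_single, Finsupp.mapDomain_single]
      rfl

lemma Kuv_cons (u v : ℚ) (a : Bool) (w : List Bool) :
    Kuv u v (a :: w) = half (zgen u v a) (Kuv u v w) := by
  cases w with
  | nil => exact (half_delta_nil u v a).symm
  | cons b w' => rfl

lemma Kuv_false_eq (u v : ℚ) (w : List Bool) :
    Kuv u v (false :: w) = prependLetter true (shL [false] (Kuv u v w)) := by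
  rw [Kuv_cons]
  show half (Finsupp.single [true, false] 1) (Kuv u v w) = _
  rw [half_single, one_smul]

lemma Kuv_true_eq (u v : ℚ) (w : List Bool) :
    Kuv u v (true :: w) = u • prependLetter true (shL [false, false] (Kuv u v w))
      + v • prependLetter true (shL [true, false] (Kuv u v w)) := by
  rw [Kuv_cons]
  show half (u • Finsupp.single [true, false, false] 1
      + v • Finsupp.single [true, true, false] 1) (Kuv u v w) = _
  rw [half_add_left, half_smul_left, half_smul_left, half_single, half_single,
    one_smul, one_smul]

/-- Coefficient lemmas for `Kuv`. -/
lemma Kuv_apply_false (u v : ℚ) (w : List Bool) (y : Word) :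
    Kuv u v w (false :: y) = 0 := by
  cases w with
  | nil => rw [Kuv_nil, delta_apply]; simp
  | cons a w' =>
      cases a with
      | false => rw [Kuv_false_eq, prependLetter_apply_cons]; simp
      | true =>
          rw [Kuv_true_eq, Finsupp.add_apply, Finsupp.smul_apply, Finsupp.smul_apply,
            prependLetter_apply_cons, prependLetter_apply_cons]
          simp

lemma Kuv_cons_apply_nil (u v : ℚ) (a : Bool) (w : List Bool) :
    Kuv u v (a :: w) [] = 0 := by
  cases a with
  | false => rw [Kuv_false_eq, prependLetter_apply_nil]
  | true =>
      rw [Kuv_true_eq, Finsupp.add_apply, Finsupp.smul_apply, Finsupp.smul_apply,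
        prependLetter_apply_nil, prependLetter_apply_nil]
      simp

lemma Kuv_false_apply (u v : ℚ) (w : List Bool) (z : Word) :
    Kuv u v (false :: w) (true :: z) = shLc [false] (⇑(Kuv u v w)) z := by
  rw [Kuv_false_eq, prependLetter_apply_cons, if_pos rfl, shL_apply]

lemma Kuv_true_apply (u v : ℚ) (w : List Bool) (z : Word) :
    Kuv u v (true :: w) (true :: z)
      = u * shLc [false, false] (⇑(Kuv u v w)) z + v * shLc [true, false] (⇑(Kuv u v w)) z := by
  rw [Kuv_true_eq, Finsupp.add_apply, Finsupp.smul_apply, Finsupp.smul_apply,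
    prependLetter_apply_cons, prependLetter_apply_cons, if_pos rfl, if_pos rfl,
    shL_apply, shL_apply, smul_eq_mul, smul_eq_mul]

/-! ### The order on words, and block words -/

/-- `geW x c`: `x` and `c` have the same length and `x ≥ c` lexicographically
(with `false < true`). -/
def geW : Word → Word → Prop
  | [], [] => True
  | a :: x, b :: c => (b = false ∧ a = true ∧ x.length = c.length) ∨ (a = b ∧ geW x c)
  | _, [] => False
  | [], _ => False

lemma geW_length : ∀ {x c : Word}, geW x c → x.length = c.length := by
  intro x
  induction x with
  | nil => intro c h; cases c with
      | nil => rfl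
      | cons b c => exact absurd h (by simp [geW])
  | cons a x ih =>
      intro c h
      cases c with
      | nil => exact absurd h (by simp [geW])
      | cons b c =>
          rcases h with ⟨_, _, hl⟩ | ⟨_, hg⟩
          · simpa using hl
          · simpa using ih hg

lemma geW_refl : ∀ c : Word, geW c c := by
  intro c
  induction c with
  | nil => trivial
  | cons a c ih => exact Or.inr ⟨rfl, ih⟩

lemma geW_nil (h : geW x []) : x = [] := by
  cases x with
  | nil => rfl
  | cons a x => exact absurd h (by simp [geW])

lemma geW_nil_left {c : Word} (h : geW [] c) : c = [] := by
  cases c with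
  | nil => rfl
  | cons b c => exact absurd h (by simp [geW])

lemma geW_true_led {x d : Word} (h : geW x (true :: d)) :
    ∃ x', x = true :: x' ∧ geW x' d := by
  cases x with
  | nil => exact absurd h (by simp [geW])
  | cons a x =>
      rcases h with ⟨hb, _, _⟩ | ⟨ha, hg⟩
      · exact absurd hb (by simp)
      · exact ⟨x, by rw [ha], hg⟩

/-- binary value of a word -/
def bin : Word → ℕ
  | [] => 0
  | a :: z => (cond a 1 0) * 2 ^ z.length + bin z

lemma bin_lt (z : Word) : bin z < 2 ^ z.length := by
  induction z with
  | nil => norm_num [bin]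
  | cons a z ih =>
      have : (cond a 1 0) ≤ 1 := by cases a <;> simp
      calc (cond a 1 0) * 2 ^ z.length + bin z
          ≤ 1 * 2 ^ z.length + bin z := by
            exact Nat.add_le_add_right (Nat.mul_le_mul_right _ this) _
        _ < 2 ^ z.length + 2 ^ z.length := by omega
        _ = 2 ^ (a :: z).length := by
            simp [List.length_cons, pow_succ]; ring

lemma geW_bin_le : ∀ {x c : Word}, geW x c → bin c ≤ bin x := by
  intro x
  induction x with
  | nil => intro c h; rw [geW_nil_left h]
  | cons a x ih =>
      intro c h
      cases c with
      | nil => exact absurd h (by simp [geW])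
      | cons b c =>
          rcases h with ⟨hb, ha, hl⟩ | ⟨hab, hg⟩
          · subst hb; subst ha
            show 0 * 2 ^ c.length + bin c ≤ 1 * 2 ^ x.length + bin x
            have := bin_lt c
            rw [hl] at *
            omega
          · subst hab
            have hl : x.length = c.length := geW_length hg
            show (cond a 1 0) * 2 ^ c.length + bin c ≤ (cond a 1 0) * 2 ^ x.length + bin x
            rw [hl]
            exact Nat.add_le_add_left (ih hg) _

lemma geW_bin_eq : ∀ {x c : Word}, geW x c → bin x = bin c → x = c := by
  intro x
  induction x with
  | nil => intro c h _; rw [geW_nil_left h]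
  | cons a x ih =>
      intro c h hbin
      cases c with
      | nil => exact absurd h (by simp [geW])
      | cons b c =>
          rcases h with ⟨hb, ha, hl⟩ | ⟨hab, hg⟩
          · exfalso
            subst hb; subst ha
            have h1 : bin (true :: x) = 1 * 2 ^ x.length + bin x := rfl
            have h2 : bin (false :: c) = 0 * 2 ^ c.length + bin c := rfl
            have := bin_lt c
            rw [h1, h2] at hbin
            rw [hl] at *
            omega
          · subst hab
            have hl : x.length = c.length := geW_length hg
            have h1 : bin (a :: x) = (cond a 1 0) * 2 ^ x.length + bin x := rfl
            have h2 : bin (a :: c) = (cond a 1 0) * 2 ^ c.length + bin c := rfl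
            rw [h1, h2, hl] at hbin
            have : bin x = bin c := by omega
            rw [ih hg this]

/-- prefix of `p` zeros -/
def B0 : ℕ → Word → Word
  | 0, c => c
  | p + 1, c => false :: B0 p c

/-- prefix of `q` copies of the block `(1,0)` -/
def Bq : ℕ → Word → Word
  | 0, c => c
  | q + 1, c => true :: false :: Bq q c

lemma B0_length (p : ℕ) (c : Word) : (B0 p c).length = p + c.length := by
  induction p with
  | zero => show c.length = 0 + c.length; omega
  | succ p ih => show (B0 p c).length + 1 = p + 1 + c.length; omega

lemma Bq_length (q : ℕ) (c : Word) : (Bq q c).length = 2 * q + c.length := by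
  induction q with
  | zero => show c.length = 2 * 0 + c.length; omega
  | succ q ih => show (Bq q c).length + 1 + 1 = 2 * (q + 1) + c.length; omega

lemma Bq_snoc (q : ℕ) (c : Word) : Bq q (true :: false :: c) = Bq (q + 1) c := by
  induction q with
  | zero => rfl
  | succ q ih => show true :: false :: Bq q (true :: false :: c) = _; rw [ih]; rfl

lemma cat0_nil : cat0 [] = [] := rfl
lemma cat0_false (w : List Bool) : cat0 (false :: w) = true :: false :: cat0 w := rfl
lemma cat0_true (w : List Bool) : cat0 (true :: w) = true :: false :: false :: cat0 w := rfl
lemma cat1_nil : cat1 [] = [] := rfl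
lemma cat1_false (w : List Bool) : cat1 (false :: w) = true :: false :: cat1 w := rfl
lemma cat1_true (w : List Bool) : cat1 (true :: w) = true :: true :: false :: cat1 w := rfl

lemma cat0_not_false_led (w : List Bool) (c₀ : Word) : cat0 w ≠ false :: c₀ := by
  cases w with
  | nil => simp [cat0_nil]
  | cons a w => cases a <;> simp [cat0_false, cat0_true]

lemma cat1_not_false_led (w : List Bool) (c₀ : Word) : cat1 w ≠ false :: c₀ := by
  cases w with
  | nil => simp [cat1_nil]
  | cons a w => cases a <;> simp [cat1_false, cat1_true]

lemma cat0_inj : ∀ {w w' : List Bool}, cat0 w = cat0 w' → w = w' := by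
  intro w
  induction w with
  | nil =>
      intro w' h
      cases w' with
      | nil => rfl
      | cons b w' => cases b <;> simp [cat0_nil, cat0_false, cat0_true] at h
  | cons a w ih =>
      intro w' h
      cases w' with
      | nil => cases a <;> simp [cat0_nil, cat0_false, cat0_true] at h
      | cons b w' =>
          cases a <;> cases b <;>
            simp only [cat0_false, cat0_true, List.cons.injEq, true_and] at h
          · rw [ih h]
          · exact absurd h (cat0_not_false_led w (cat0 w'))
          · exact absurd h.symm (cat0_not_false_led w' (cat0 w))
          · rw [ih h]

lemma cat1_inj : ∀ {w w' : List Bool}, cat1 w = cat1 w' → w = w' := by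
  intro w
  induction w with
  | nil =>
      intro w' h
      cases w' with
      | nil => rfl
      | cons b w' => cases b <;> simp [cat1_nil, cat1_false, cat1_true] at h
  | cons a w ih =>
      intro w' h
      cases w' with
      | nil => cases a <;> simp [cat1_nil, cat1_false, cat1_true] at h
      | cons b w' =>
          cases a <;> cases b <;>
            simp only [cat1_false, cat1_true, List.cons.injEq, true_and] at h
          · rw [ih h]
          · exact absurd h.1 (by simp)
          · exact absurd h.1 (by simp)
          · rw [ih h]

/-! ### Support estimates: the `u ≠ 0` case -/

lemma shLc_length : ∀ (x : Word) {t : Word} {F : Word → ℚ} {n : ℕ},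
    (∀ y, F y ≠ 0 → y.length = n) → shLc t F x ≠ 0 → x.length = t.length + n := by
  intro x
  induction x with
  | nil =>
      intro t F n hF hx
      rw [shLc_apply_nil] at hx
      cases t with
      | nil =>
          simp only [if_pos rfl] at hx
          have := hF [] hx
          simp [← this]
      | cons b t => simp at hx
  | cons a z ih =>
      intro t F n hF hx
      cases t with
      | nil =>
          rw [shLc_nil] at hx
          simpa using hF _ hx
      | cons b t =>
          rw [shLc_cons_cons] at hx
          have h2 : (if b = a then shLc t F z else 0) ≠ 0
              ∨ shLc (b :: t) (fun y => F (a :: y)) z ≠ 0 := by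
            by_contra hc
            push_neg at hc
            rw [hc.1, hc.2, add_zero] at hx
            exact hx rfl
          rcases h2 with h2 | h2
          · have hb : b = a := by by_contra hb; rw [if_neg hb] at h2; exact h2 rfl
            rw [if_pos hb] at h2
            have := ih hF h2
            simp only [List.length_cons]
            omega
          · cases n with
            | zero =>
                exfalso
                apply h2
                apply shLc_zero
                intro y
                by_contra hy
                push_neg at hy
                have := hF (a :: y) hy
                simp at this
            | succ m =>
                have hF' : ∀ y, F (a :: y) ≠ 0 → y.length = m := by
                  intro y hy
                  have := hF (a :: y) hy
                  simpa using this
                have := ih hF' h2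
                simp only [List.length_cons, List.length_nil] at this ⊢
                omega

lemma sum_ne_zero_cases {A B : ℚ} (h : A + B ≠ 0) : A ≠ 0 ∨ B ≠ 0 := by
  by_contra hc
  push_neg at hc
  rw [hc.1, hc.2, add_zero] at h
  exact h rfl

lemma T0 : ∀ (x : Word) {c : Word} {F : Word → ℚ},
    (∀ y, F y ≠ 0 → geW y c) → shLc [false] F x ≠ 0 → geW x (false :: c) := by
  intro x
  induction x with
  | nil => intro c F hF hx; rw [shLc_apply_nil] at hx; simp at hx
  | cons a z ih =>
      intro c F hF hx
      rw [shLc_cons_cons] at hx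
      rcases sum_ne_zero_cases hx with h | h
      · have hb : false = a := by by_contra hb; rw [if_neg hb] at h; exact h rfl
        subst hb
        rw [if_pos rfl, shLc_nil] at h
        exact Or.inr ⟨rfl, hF z h⟩
      · cases a with
        | false =>
            match c, hF with
            | [], hF =>
                exact absurd (shLc_zero (fun y => by
                  by_contra hy; push_neg at hy
                  exact absurd (geW_length (hF _ hy)) (by simp)) [false] z) h
            | true :: c₀, hF =>
                exact absurd (shLc_zero (fun y => by
                  by_contra hy; push_neg at hy
                  rcases hF _ hy with ⟨hb, _, _⟩ | ⟨ha, _⟩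
                  · simp at hb
                  · simp at ha) [false] z) h
            | false :: c₀, hF =>
                have hF' : ∀ y, F (false :: y) ≠ 0 → geW y c₀ := by
                  intro y hy
                  rcases hF _ hy with ⟨_, ha, _⟩ | ⟨_, hg⟩
                  · simp at ha
                  · exact hg
                exact Or.inr ⟨rfl, ih hF' h⟩
        | true =>
            refine Or.inl ⟨rfl, rfl, ?_⟩
            match c, hF with
            | [], hF =>
                exact absurd (shLc_zero (fun y => by
                  by_contra hy; push_neg at hy
                  exact absurd (geW_length (hF _ hy)) (by simp)) [false] z) h
            | true :: c₀, hF =>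
                have hF' : ∀ y, F (true :: y) ≠ 0 → geW y c₀ := by
                  intro y hy
                  rcases hF _ hy with ⟨hb, _, _⟩ | ⟨_, hg⟩
                  · simp at hb
                  · exact hg
                have := geW_length (ih hF' h)
                simp only [List.length_cons, List.length_nil] at this ⊢
                omega
            | false :: c₀, hF =>
                have hF' : ∀ y, F (true :: y) ≠ 0 → y.length = c₀.length := by
                  intro y hy
                  have := geW_length (hF _ hy)
                  simpa using this
                have := shLc_length z hF' h
                simp only [List.length_cons, List.length_nil] at this ⊢
                omega

lemma T00 : ∀ (x : Word) {c : Word} {F : Word → ℚ},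
    (∀ y, F y ≠ 0 → geW y c) → shLc [false, false] F x ≠ 0 →
    geW x (false :: false :: c) := by
  intro x
  induction x with
  | nil => intro c F hF hx; rw [shLc_apply_nil] at hx; simp at hx
  | cons a z ih =>
      intro c F hF hx
      rw [shLc_cons_cons] at hx
      rcases sum_ne_zero_cases hx with h | h
      · have hb : false = a := by by_contra hb; rw [if_neg hb] at h; exact h rfl
        subst hb
        rw [if_pos rfl] at h
        exact Or.inr ⟨rfl, T0 z hF h⟩
      · cases a with
        | false =>
            match c, hF with
            | [], hF =>
                exact absurd (shLc_zero (fun y => by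
                  by_contra hy; push_neg at hy
                  exact absurd (geW_length (hF _ hy)) (by simp)) [false, false] z) h
            | true :: c₀, hF =>
                exact absurd (shLc_zero (fun y => by
                  by_contra hy; push_neg at hy
                  rcases hF _ hy with ⟨hb, _, _⟩ | ⟨ha, _⟩
                  · simp at hb
                  · simp at ha) [false, false] z) h
            | false :: c₀, hF =>
                have hF' : ∀ y, F (false :: y) ≠ 0 → geW y c₀ := by
                  intro y hy
                  rcases hF _ hy with ⟨_, ha, _⟩ | ⟨_, hg⟩
                  · simp at ha
                  · exact hg
                exact Or.inr ⟨rfl, ih hF' h⟩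
        | true =>
            refine Or.inl ⟨rfl, rfl, ?_⟩
            match c, hF with
            | [], hF =>
                exact absurd (shLc_zero (fun y => by
                  by_contra hy; push_neg at hy
                  exact absurd (geW_length (hF _ hy)) (by simp)) [false, false] z) h
            | true :: c₀, hF =>
                have hF' : ∀ y, F (true :: y) ≠ 0 → geW y c₀ := by
                  intro y hy
                  rcases hF _ hy with ⟨hb, _, _⟩ | ⟨_, hg⟩
                  · simp at hb
                  · exact hg
                have := geW_length (ih hF' h)
                simp only [List.length_cons, List.length_nil] at this ⊢
                omega
            | false :: c₀, hF =>
                have hF' : ∀ y, F (true :: y) ≠ 0 → y.length = c₀.length := by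
                  intro y hy
                  have := geW_length (hF _ hy)
                  simpa using this
                have := shLc_length z hF' h
                simp only [List.length_cons, List.length_nil] at this ⊢
                omega

lemma T2 : ∀ (x : Word) {c : Word} {F : Word → ℚ},
    (∀ y, F y ≠ 0 → geW y c) → (∀ c₀, c ≠ false :: c₀) →
    shLc [true, false] F x ≠ 0 → geW x (false :: false :: c) := by
  intro x
  induction x with
  | nil => intro c F hF hc hx; rw [shLc_apply_nil] at hx; simp at hx
  | cons a z ih =>
      intro c F hF hc hx
      rw [shLc_cons_cons] at hx
      cases a with
      | false =>
          exfalso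
          rw [if_neg (by simp)] at hx
          rw [zero_add] at hx
          apply hx
          apply shLc_zero
          intro y
          by_contra hy
          push_neg at hy
          match c, hF, hc with
          | [], hF, hc => exact absurd (geW_length (hF _ hy)) (by simp)
          | true :: c₀, hF, hc =>
              rcases hF _ hy with ⟨hb, _, _⟩ | ⟨ha, _⟩
              · simp at hb
              · simp at ha
          | false :: c₀, hF, hc => exact (hc c₀) rfl
      | true =>
          refine Or.inl ⟨rfl, rfl, ?_⟩
          rcases sum_ne_zero_cases hx with h | h
          · rw [if_pos rfl] at h
            have hF' : ∀ y, F y ≠ 0 → y.length = c.length :=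
              fun y hy => geW_length (hF y hy)
            have := shLc_length z hF' h
            simp only [List.length_cons, List.length_nil] at this ⊢
            omega
          · match c, hF with
            | [], hF =>
                exact absurd (shLc_zero (fun y => by
                  by_contra hy; push_neg at hy
                  exact absurd (geW_length (hF _ hy)) (by simp)) [true, false] z) h
            | b :: c₀, hF =>
                have hF' : ∀ y, F (true :: y) ≠ 0 → y.length = c₀.length := by
                  intro y hy
                  have := geW_length (hF _ hy)
                  simpa using this
                have := shLc_length z hF' h
                simp only [List.length_cons, List.length_nil] at this ⊢
                omega

lemma lemA (u v : ℚ) : ∀ (w : List Bool) (x : Word),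
    Kuv u v w x ≠ 0 → geW x (cat0 w) := by
  intro w
  induction w with
  | nil =>
      intro x hx
      rw [Kuv_nil, delta_apply] at hx
      have : x = [] := by by_contra h; rw [if_neg (by exact fun he => h he.symm)] at hx; exact hx rfl
      rw [this, cat0_nil]; trivial
  | cons a w ih =>
      intro x hx
      match x with
      | [] => rw [Kuv_cons_apply_nil] at hx; exact absurd rfl hx
      | false :: z => rw [Kuv_apply_false] at hx; exact absurd rfl hx
      | true :: z =>
          cases a with
          | false =>
              rw [Kuv_false_apply] at hx
              rw [cat0_false]
              exact Or.inr ⟨rfl, T0 z ih hx⟩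
          | true =>
              rw [Kuv_true_apply] at hx
              rw [cat0_true]
              refine Or.inr ⟨rfl, ?_⟩
              rcases sum_ne_zero_cases hx with h | h
              · have h' : shLc [false, false] (⇑(Kuv u v w)) z ≠ 0 :=
                  fun h0 => h (by rw [h0, mul_zero])
                exact T00 z ih h'
              · have h' : shLc [true, false] (⇑(Kuv u v w)) z ≠ 0 :=
                  fun h0 => h (by rw [h0, mul_zero])
                exact T2 z ih (fun c₀ => cat0_not_false_led w c₀) h'

lemma lemB (u v : ℚ) : ∀ (w : List Bool),
    Kuv u v w (cat0 w) = u ^ (w.count true) := by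
  intro w
  induction w with
  | nil => rw [cat0_nil, Kuv_nil, delta_apply]; simp
  | cons a w ih =>
      have hKf : ∀ y, (⇑(Kuv u v w)) (false :: y) = 0 := fun y => Kuv_apply_false u v w y
      cases a with
      | false =>
          rw [cat0_false, Kuv_false_apply, shLc_cons_cons, if_pos rfl, shLc_nil,
            shLc_zero (fun y => hKf y) [false], ih, add_zero]
          simp [List.count_cons]
      | true =>
          rw [cat0_true, Kuv_true_apply]
          rw [shLc_cons_cons, if_pos rfl, shLc_cons_cons, if_pos rfl, shLc_nil]
          rw [shLc_zero (fun y => hKf y) [false], add_zero]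
          rw [shLc_zero (fun y => hKf y) [false, false], add_zero]
          rw [shLc_cons_cons, if_neg (by simp)]
          rw [shLc_zero (fun y => hKf y) [true, false], zero_add, ih]
          rw [List.count_cons]
          simp [pow_succ]
          ring

/-! ### Nested states for the `u = 0` case -/

lemma shLc_comm : ∀ (x t s : Word) (F : Word → ℚ),
    shLc t (shLc s F) x = shLc s (shLc t F) x := by
  intro x
  induction x with
  | nil =>
      intro t s F
      rw [shLc_apply_nil, shLc_apply_nil]
      cases t with
      | nil =>
          cases s with
          | nil => simp [shLc_apply_nil]
          | cons c s' => simp [shLc_apply_nil]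
      | cons b t' =>
          cases s with
          | nil => simp [shLc_apply_nil]
          | cons c s' => simp [shLc_apply_nil]
  | cons a z ih =>
      intro t s F
      cases t with
      | nil =>
          rw [shLc_nil]
          exact (shLc_congr (fun y => shLc_nil F y) s (a :: z)).symm
      | cons b t' =>
          cases s with
          | nil =>
              rw [shLc_nil (shLc (b :: t') F) (a :: z)]
              exact shLc_congr (fun y => shLc_nil F y) (b :: t') (a :: z)
          | cons c s' =>
              rw [shLc_cons_cons, shLc_cons_cons]
              have e1 : ∀ y, shLc (c :: s') F (a :: y)
                  = (fun y' => (if c = a then shLc s' F y' else 0)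
                      + shLc (c :: s') (fun y'' => F (a :: y'')) y') y :=
                fun y => shLc_cons_cons c s' F a y
              have e2 : ∀ y, shLc (b :: t') F (a :: y)
                  = (fun y' => (if b = a then shLc t' F y' else 0)
                      + shLc (b :: t') (fun y'' => F (a :: y'')) y') y :=
                fun y => shLc_cons_cons b t' F a y
              rw [shLc_congr e1 (b :: t') z, shLc_congr e2 (c :: s') z]
              rw [shLc_add _ _ (b :: t') z, shLc_add _ _ (c :: s') z]
              have i1 : shLc (b :: t') (fun y' => if c = a then shLc s' F y' else 0) z
                  = if c = a then shLc (b :: t') (shLc s' F) z else 0 := by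
                by_cases hca : c = a
                · rw [if_pos hca]
                  exact shLc_congr (fun y => by rw [if_pos hca]) (b :: t') z
                · rw [if_neg hca]
                  exact shLc_zero (fun y => by rw [if_neg hca]) (b :: t') z
              have i2 : shLc (c :: s') (fun y' => if b = a then shLc t' F y' else 0) z
                  = if b = a then shLc (c :: s') (shLc t' F) z else 0 := by
                by_cases hba : b = a
                · rw [if_pos hba]
                  exact shLc_congr (fun y => by rw [if_pos hba]) (c :: s') z
                · rw [if_neg hba]
                  exact shLc_zero (fun y => by rw [if_neg hba]) (c :: s') z
              rw [i1, i2]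
              rw [ih (b :: t') (c :: s') (fun y => F (a :: y))]
              have i3 : shLc t' (shLc (c :: s') F) z = shLc (c :: s') (shLc t' F) z :=
                ih t' (c :: s') F
              have i4 : shLc s' (shLc (b :: t') F) z = shLc (b :: t') (shLc s' F) z :=
                ih s' (b :: t') F
              rw [← i3, ← i4]
              by_cases hba : b = a <;> by_cases hca : c = a <;>
                simp [hba, hca] <;> ring

/-- iterated `[1,0]`-tail states -/
def NFq : ℕ → (Word → ℚ) → Word → ℚ
  | 0, F => F
  | q + 1, F => shLc [true, false] (NFq q F)

def NF : ℕ → ℕ → (Word → ℚ) → Word → ℚ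
  | 0, q, F => NFq q F
  | p + 1, q, F => shLc [false] (NF p q F)

lemma NF_zero_zero (F : Word → ℚ) : NF 0 0 F = F := rfl
lemma NF_succ_p (p q : ℕ) (F : Word → ℚ) : NF (p + 1) q F = shLc [false] (NF p q F) := rfl
lemma NF_zero_succ (q : ℕ) (F : Word → ℚ) : NF 0 (q + 1) F = shLc [true, false] (NF 0 q F) := rfl

lemma NF_congr {F G : Word → ℚ} (h : ∀ y, F y = G y) :
    ∀ (p q : ℕ) (x : Word), NF p q F x = NF p q G x := by
  intro p
  induction p with
  | zero =>
      intro q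
      induction q with
      | zero => exact fun x => h x
      | succ q ihq =>
          intro x
          rw [NF_zero_succ, NF_zero_succ]
          exact shLc_congr (fun y => ihq y) [true, false] x
  | succ p ihp =>
      intro q x
      rw [NF_succ_p, NF_succ_p]
      exact shLc_congr (fun y => ihp q y) [false] x

lemma NF_zero {F : Word → ℚ} (h : ∀ y, F y = 0) :
    ∀ (p q : ℕ) (x : Word), NF p q F x = 0 := by
  intro p
  induction p with
  | zero =>
      intro q
      induction q with
      | zero => exact fun x => h x
      | succ q ihq =>
          intro x
          rw [NF_zero_succ]
          exact shLc_zero (fun y => ihq y) [true, false] x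
  | succ p ihp =>
      intro q x
      rw [NF_succ_p]
      exact shLc_zero (fun y => ihp q y) [false] x

lemma NF_add (F G : Word → ℚ) : ∀ (p q : ℕ) (x : Word),
    NF p q (fun y => F y + G y) x = NF p q F x + NF p q G x := by
  intro p
  induction p with
  | zero =>
      intro q
      induction q with
      | zero => exact fun x => rfl
      | succ q ihq =>
          intro x
          rw [NF_zero_succ, NF_zero_succ, NF_zero_succ]
          rw [shLc_congr (fun y => ihq y) [true, false] x]
          exact shLc_add _ _ [true, false] x
  | succ p ihp =>
      intro q x
      rw [NF_succ_p, NF_succ_p, NF_succ_p]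
      rw [shLc_congr (fun y => ihp q y) [false] x]
      exact shLc_add _ _ [false] x

lemma NF_smul (c : ℚ) (F : Word → ℚ) : ∀ (p q : ℕ) (x : Word),
    NF p q (fun y => c * F y) x = c * NF p q F x := by
  intro p
  induction p with
  | zero =>
      intro q
      induction q with
      | zero => exact fun x => rfl
      | succ q ihq =>
          intro x
          rw [NF_zero_succ, NF_zero_succ]
          rw [shLc_congr (fun y => ihq y) [true, false] x]
          exact shLc_smul _ _ [true, false] x
  | succ p ihp =>
      intro q x
      rw [NF_succ_p, NF_succ_p]
      rw [shLc_congr (fun y => ihp q y) [false] x]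
      exact shLc_smul _ _ [false] x

lemma NF_shl0 (F : Word → ℚ) : ∀ (p q : ℕ) (x : Word),
    NF p q (shLc [false] F) x = NF (p + 1) q F x := by
  intro p
  induction p with
  | zero =>
      intro q
      induction q with
      | zero => intro x; rfl
      | succ q ihq =>
          intro x
          rw [NF_zero_succ, NF_succ_p, NF_zero_succ]
          rw [shLc_congr (fun y => ihq y) [true, false] x]
          exact shLc_comm x [true, false] [false] (NF 0 q F)
  | succ p ihp =>
      intro q x
      rw [NF_succ_p, NF_succ_p]
      exact shLc_congr (fun y => ihp q y) [false] x

lemma NF_shl10 (F : Word → ℚ) : ∀ (p q : ℕ) (x : Word),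
    NF p q (shLc [true, false] F) x = NF p (q + 1) F x := by
  intro p
  induction p with
  | zero =>
      intro q
      induction q with
      | zero => intro x; rfl
      | succ q ihq =>
          intro x
          rw [NF_zero_succ, NF_zero_succ, NF_zero_succ]
          exact shLc_congr (fun y => ihq y) [true, false] x
  | succ p ihp =>
      intro q x
      rw [NF_succ_p, NF_succ_p]
      exact shLc_congr (fun y => ihp q y) [false] x

lemma NF_apply_nil (p q : ℕ) (F : Word → ℚ) :
    NF p q F [] = if p = 0 ∧ q = 0 then F [] else 0 := by
  cases p with
  | zero =>
      cases q with
      | zero => simp [NF_zero_zero]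
      | succ q => rw [NF_zero_succ, shLc_apply_nil]; simp
  | succ p => rw [NF_succ_p, shLc_apply_nil]; simp

lemma R_false : ∀ (p q : ℕ) (F : Word → ℚ) (z : Word),
    NF p q F (false :: z)
      = (p : ℚ) * NF (p - 1) q F z + NF p q (fun y => F (false :: y)) z := by
  intro p
  induction p with
  | zero =>
      intro q
      induction q with
      | zero => intro F z; simp [NF_zero_zero]
      | succ q ihq =>
          intro F z
          rw [NF_zero_succ, shLc_cons_cons, if_neg (by simp), zero_add]
          have hc : ∀ y, NF 0 q F (false :: y)
              = NF 0 q (fun y' => F (false :: y')) y := by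
            intro y
            rw [ihq F y]
            simp
          rw [shLc_congr hc [true, false] z]
          rw [NF_zero_succ]
          simp
  | succ p ihp =>
      intro q F z
      rw [NF_succ_p, shLc_cons_cons, if_pos rfl, shLc_nil]
      have hc : ∀ y, NF p q F (false :: y)
          = (p : ℚ) * NF (p - 1) q F y + NF p q (fun y' => F (false :: y')) y :=
        fun y => ihp q F y
      rw [shLc_congr hc [false] z]
      rw [shLc_add (fun y => (p:ℚ) * NF (p-1) q F y) _ [false] z]
      rw [shLc_smul (p : ℚ) (NF (p-1) q F) [false] z]
      have h2 : shLc [false] (NF p q (fun y' => F (false :: y'))) z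
          = NF (p + 1) q (fun y' => F (false :: y')) z := by rw [NF_succ_p]
      rw [h2]
      have h3 : (p : ℚ) * shLc [false] (NF (p - 1) q F) z = (p : ℚ) * NF p q F z := by
        cases p with
        | zero => simp
        | succ p' =>
            have : shLc [false] (NF (p' + 1 - 1) q F) z = NF (p' + 1) q F z := by
              rw [NF_succ_p]; rfl
            rw [this]
      rw [h3]
      push_cast
      ring

lemma R_true : ∀ (p q : ℕ) (F : Word → ℚ) (z : Word),
    NF p q F (true :: z)
      = (q : ℚ) * NF (p + 1) (q - 1) F z + NF p q (fun y => F (true :: y)) z := by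
  intro p
  induction p with
  | zero =>
      intro q
      induction q with
      | zero => intro F z; simp [NF_zero_zero]
      | succ q ihq =>
          intro F z
          rw [NF_zero_succ, shLc_cons_cons, if_pos rfl]
          have hc : ∀ y, NF 0 q F (true :: y)
              = (q : ℚ) * NF 1 (q - 1) F y + NF 0 q (fun y' => F (true :: y')) y :=
            fun y => ihq F y
          rw [shLc_congr hc [true, false] z]
          rw [shLc_add (fun y => (q:ℚ) * NF 1 (q-1) F y) _ [true, false] z]
          rw [shLc_smul (q : ℚ) (NF 1 (q-1) F) [true, false] z]
          have h2 : shLc [true, false] (NF 0 q (fun y' => F (true :: y'))) z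
              = NF 0 (q + 1) (fun y' => F (true :: y')) z := by rw [NF_zero_succ]
          rw [h2]
          have h1 : shLc [false] (NF 0 q F) z = NF 1 q F z := by rw [NF_succ_p]
          rw [h1]
          have h3 : (q : ℚ) * shLc [true, false] (NF 1 (q - 1) F) z
              = (q : ℚ) * NF 1 q F z := by
            cases q with
            | zero => simp
            | succ q' =>
                have e1 : shLc [true, false] (NF 1 (q' + 1 - 1) F) z
                    = shLc [true, false] (shLc [false] (NF 0 q' F)) z := rfl
                have e2 : shLc [true, false] (shLc [false] (NF 0 q' F)) z
                    = shLc [false] (shLc [true, false] (NF 0 q' F)) z :=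
                  shLc_comm z [true, false] [false] (NF 0 q' F)
                have e3 : shLc [false] (shLc [true, false] (NF 0 q' F)) z
                    = NF 1 (q' + 1) F z := by
                  rw [NF_succ_p, NF_zero_succ]
                rw [e1, e2, e3]
          rw [h3]
          push_cast
          ring
  | succ p ihp =>
      intro q F z
      rw [NF_succ_p, shLc_cons_cons, if_neg (by simp), zero_add]
      have hc : ∀ y, NF p q F (true :: y)
          = (q : ℚ) * NF (p + 1) (q - 1) F y + NF p q (fun y' => F (true :: y')) y :=
        fun y => ihp q F y
      rw [shLc_congr hc [false] z]
      rw [shLc_add (fun y => (q:ℚ) * NF (p+1) (q-1) F y) _ [false] z]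
      rw [shLc_smul (q : ℚ) (NF (p+1) (q-1) F) [false] z]
      have h2 : shLc [false] (NF p q (fun y' => F (true :: y'))) z
          = NF (p + 1) q (fun y' => F (true :: y')) z := by rw [NF_succ_p]
      have h1 : shLc [false] (NF (p + 1) (q - 1) F) z = NF (p + 2) (q - 1) F z := rfl
      rw [h2, h1]

/-! ### Support estimate and positivity: the `u = 0` case -/

lemma Kuv0_true_apply (v : ℚ) (w : List Bool) (z : Word) :
    Kuv 0 v (true :: w) (true :: z) = v * shLc [true, false] (⇑(Kuv 0 v w)) z := by
  rw [Kuv_true_apply, zero_mul, zero_add]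

lemma GV (v : ℚ) : ∀ (x : Word) (p q : ℕ) (w : List Bool),
    NF p q (⇑(Kuv 0 v w)) x ≠ 0 → geW x (B0 p (Bq q (cat1 w))) := by
  intro x
  induction x with
  | nil =>
      intro p q w hx
      rw [NF_apply_nil] at hx
      by_cases hpq : p = 0 ∧ q = 0
      · obtain ⟨rfl, rfl⟩ := hpq
        rw [if_pos ⟨rfl, rfl⟩] at hx
        cases w with
        | nil => exact trivial
        | cons a w => rw [Kuv_cons_apply_nil] at hx; exact absurd rfl hx
      · rw [if_neg hpq] at hx; exact absurd rfl hx
  | cons a z ih =>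
      intro p q w hx
      cases a with
      | false =>
          rw [R_false] at hx
          rw [NF_zero (fun y => Kuv_apply_false 0 v w y) p q z, add_zero] at hx
          rcases mul_ne_zero_iff.mp hx with ⟨hp, hNF⟩
          cases p with
          | zero => simp at hp
          | succ p' =>
              have hz := ih p' q w (by exact_mod_cast hNF)
              exact Or.inr ⟨rfl, hz⟩
      | true =>
          rw [R_true] at hx
          rcases sum_ne_zero_cases hx with h | h
          · rcases mul_ne_zero_iff.mp h with ⟨hq, hNF⟩
            cases q with
            | zero => simp at hq
            | succ q' =>
                have hz := ih (p + 1) q' w (by exact_mod_cast hNF)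
                cases p with
                | zero => exact Or.inr ⟨rfl, hz⟩
                | succ p'' =>
                    refine Or.inl ⟨rfl, rfl, ?_⟩
                    have hl := geW_length hz
                    simp only [B0_length, Bq_length, List.length_cons] at hl ⊢
                    omega
          · cases w with
            | nil =>
                refine absurd (NF_zero (fun y => ?_) p q z) h
                rw [Kuv_nil, delta_apply]
                simp
            | cons b w' =>
                cases b with
                | false =>
                    have hcong : ∀ y, Kuv 0 v (false :: w') (true :: y)
                        = shLc [false] (⇑(Kuv 0 v w')) y :=
                      fun y => Kuv_false_apply 0 v w' y
                    rw [NF_congr hcong p q z] at h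
                    rw [NF_shl0 (⇑(Kuv 0 v w')) p q z] at h
                    have hz := ih (p + 1) q w' h
                    rw [cat1_false]
                    cases p with
                    | zero =>
                        rw [show Bq q (true :: false :: cat1 w') = Bq (q + 1) (cat1 w') from
                          Bq_snoc q (cat1 w')]
                        exact Or.inr ⟨rfl, hz⟩
                    | succ p'' =>
                        refine Or.inl ⟨rfl, rfl, ?_⟩
                        have hl := geW_length hz
                        simp only [B0_length, Bq_length, List.length_cons] at hl ⊢
                        omega
                | true =>
                    have hcong : ∀ y, Kuv 0 v (true :: w') (true :: y)
                        = v * shLc [true, false] (⇑(Kuv 0 v w')) y :=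
                      fun y => Kuv0_true_apply v w' y
                    rw [NF_congr hcong p q z] at h
                    rw [NF_smul v (shLc [true, false] (⇑(Kuv 0 v w'))) p q z] at h
                    rw [NF_shl10 (⇑(Kuv 0 v w')) p q z] at h
                    have h' : NF p (q + 1) (⇑(Kuv 0 v w')) z ≠ 0 :=
                      fun h0 => h (by rw [h0, mul_zero])
                    have hz := ih p (q + 1) w' h'
                    rw [cat1_true]
                    cases p with
                    | zero =>
                        cases q with
                        | zero => exact Or.inr ⟨rfl, hz⟩
                        | succ q'' =>
                            refine Or.inr ⟨rfl, ?_⟩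
                            obtain ⟨z₁, rfl, hz₁⟩ := geW_true_led hz
                            refine Or.inl ⟨rfl, rfl, ?_⟩
                            have hl := geW_length hz₁
                            simp only [B0_length, Bq_length, List.length_cons] at hl ⊢
                            omega
                    | succ p'' =>
                        refine Or.inl ⟨rfl, rfl, ?_⟩
                        have hl := geW_length hz
                        simp only [B0_length, Bq_length, List.length_cons] at hl ⊢
                        omega

lemma count_true_false_cons (w : List Bool) :
    (false :: w).count true = w.count true := by simp
lemma count_true_true_cons (w : List Bool) :
    (true :: w).count true = w.count true + 1 := by simp

lemma POSv (v : ℚ) : ∀ (x : Word) (p q : ℕ) (w : List Bool),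
    0 ≤ v ^ (w.count true) * NF p q (⇑(Kuv 0 v w)) x := by
  intro x
  induction x with
  | nil =>
      intro p q w
      rw [NF_apply_nil]
      by_cases hpq : p = 0 ∧ q = 0
      · rw [if_pos hpq]
        cases w with
        | nil =>
            rw [Kuv_nil, delta_apply, if_pos rfl]
            simp
        | cons a w => rw [Kuv_cons_apply_nil]; simp
      · rw [if_neg hpq]; simp
  | cons a z ih =>
      intro p q w
      cases a with
      | false =>
          rw [R_false, NF_zero (fun y => Kuv_apply_false 0 v w y) p q z, add_zero]
          rw [show v ^ (w.count true) * ((p : ℚ) * NF (p - 1) q (⇑(Kuv 0 v w)) z)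
              = (p : ℚ) * (v ^ (w.count true) * NF (p - 1) q (⇑(Kuv 0 v w)) z) by ring]
          exact mul_nonneg (by positivity) (ih (p - 1) q w)
      | true =>
          rw [R_true, mul_add]
          apply add_nonneg
          · rw [show v ^ (w.count true) * ((q : ℚ) * NF (p + 1) (q - 1) (⇑(Kuv 0 v w)) z)
                = (q : ℚ) * (v ^ (w.count true) * NF (p + 1) (q - 1) (⇑(Kuv 0 v w)) z) by ring]
            exact mul_nonneg (by positivity) (ih (p + 1) (q - 1) w)
          · cases w with
            | nil =>
                rw [NF_zero (fun y => by rw [Kuv_nil, delta_apply]; simp) p q z]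
                simp
            | cons b w' =>
                cases b with
                | false =>
                    rw [NF_congr (fun y => Kuv_false_apply 0 v w' y) p q z,
                      NF_shl0 (⇑(Kuv 0 v w')) p q z, count_true_false_cons]
                    exact ih (p + 1) q w'
                | true =>
                    rw [NF_congr (fun y => Kuv0_true_apply v w' y) p q z,
                      NF_smul v (shLc [true, false] (⇑(Kuv 0 v w'))) p q z,
                      NF_shl10 (⇑(Kuv 0 v w')) p q z, count_true_true_cons]
                    rw [show v ^ (w'.count true + 1) * (v * NF p (q + 1) (⇑(Kuv 0 v w')) z)
                        = (v * v) * (v ^ (w'.count true) * NF p (q + 1) (⇑(Kuv 0 v w')) z) by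
                      ring]
                    exact mul_nonneg (mul_self_nonneg v) (ih p (q + 1) w')

lemma Dpos (v : ℚ) (hv : v ≠ 0) : ∀ (w : List Bool),
    0 < v ^ (w.count true) * Kuv 0 v w (cat1 w) := by
  intro w
  induction w with
  | nil =>
      rw [Kuv_nil, cat1_nil, delta_apply, if_pos rfl]
      simp
  | cons a w' ih =>
      have hKf : ∀ y, (⇑(Kuv 0 v w')) (false :: y) = 0 := fun y => Kuv_apply_false 0 v w' y
      cases a with
      | false =>
          rw [cat1_false, Kuv_false_apply]
          have e1 : shLc [false] (⇑(Kuv 0 v w')) (false :: cat1 w')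
              = NF 1 0 (⇑(Kuv 0 v w')) (false :: cat1 w') := rfl
          rw [e1, R_false, NF_zero (fun y => hKf y) 1 0 (cat1 w'), add_zero]
          rw [count_true_false_cons]
          simpa [NF_zero_zero] using ih
      | true =>
          rw [cat1_true, Kuv0_true_apply]
          have e1 : shLc [true, false] (⇑(Kuv 0 v w')) (true :: false :: cat1 w')
              = NF 0 1 (⇑(Kuv 0 v w')) (true :: false :: cat1 w') := rfl
          rw [e1, R_true]
          have e2 : NF 1 (1 - 1) (⇑(Kuv 0 v w')) (false :: cat1 w')
              = Kuv 0 v w' (cat1 w') := by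
            rw [R_false, NF_zero (fun y => hKf y) 1 0 (cat1 w'), add_zero]
            simp [NF_zero_zero]
          rw [e2]
          set B := NF 0 1 (fun y => (⇑(Kuv 0 v w')) (true :: y)) (false :: cat1 w') with hB
          have hBnn : 0 ≤ v ^ (w'.count true) * B := by
            rw [hB]
            cases w' with
            | nil =>
                rw [NF_zero (fun y => by rw [Kuv_nil, delta_apply]; simp) 0 1 (false :: cat1 [])]
                simp
            | cons b w'' =>
                cases b with
                | false =>
                    rw [NF_congr (fun y => Kuv_false_apply 0 v w'' y) 0 1 _,
                      NF_shl0 (⇑(Kuv 0 v w'')) 0 1 _, count_true_false_cons]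
                    exact POSv v _ 1 1 w''
                | true =>
                    rw [NF_congr (fun y => Kuv0_true_apply v w'' y) 0 1 _,
                      NF_smul v (shLc [true, false] (⇑(Kuv 0 v w''))) 0 1 _,
                      NF_shl10 (⇑(Kuv 0 v w'')) 0 1 _, count_true_true_cons]
                    rw [show v ^ (w''.count true + 1)
                          * (v * NF 0 2 (⇑(Kuv 0 v w'')) (false :: cat1 (true :: w'')))
                        = (v * v) * (v ^ (w''.count true)
                          * NF 0 2 (⇑(Kuv 0 v w'')) (false :: cat1 (true :: w''))) by ring]
                    exact mul_nonneg (mul_self_nonneg v) (POSv v _ 0 2 w'')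
          rw [count_true_true_cons]
          have expand : v ^ (w'.count true + 1)
                * (v * ((1 : ℕ) * Kuv 0 v w' (cat1 w') + B))
              = (v * v) * (v ^ (w'.count true) * Kuv 0 v w' (cat1 w'))
                + (v * v) * (v ^ (w'.count true) * B) := by
            push_cast
            ring
          rw [expand]
          have hvv : 0 < v * v := mul_self_pos.mpr hv
          exact add_pos_of_pos_of_nonneg (mul_pos hvv ih) (mul_nonneg (le_of_lt hvv) hBnn)

lemma Kuv0_diag_ne (v : ℚ) (hv : v ≠ 0) (w : List Bool) :
    Kuv 0 v w (cat1 w) ≠ 0 := by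
  intro h0
  have := Dpos v hv w
  rw [h0, mul_zero] at this
  exact lt_irrefl 0 this

/-! ### Triangularity and linear independence -/

lemma indep_aux (cat : List Bool → Word) (hinj : ∀ {w w'}, cat w = cat w' → w = w')
    (K : List Bool → A01)
    (hsupp : ∀ w x, K w x ≠ 0 → geW x (cat w))
    (hdiag : ∀ w, K w (cat w) ≠ 0) :
    LinearIndependent ℚ (fun w : {l : List Bool // l ≠ []} => K w.1) := by
  rw [linearIndependent_iff']
  suffices H : ∀ s : Finset {l : List Bool // l ≠ []}, ∀ g : {l : List Bool // l ≠ []} → ℚ,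
      (∑ i ∈ s, g i • K i.1) = 0 → ∀ i ∈ s, g i = 0 by
    exact H
  intro s
  induction s using Finset.strongInduction with
  | _ s ihs =>
      intro g hsum i hi
      have hne : s.Nonempty := ⟨i, hi⟩
      obtain ⟨m, hm, hmin⟩ := Finset.exists_min_image s (fun w => bin (cat w.1)) hne
      have hgm : g m = 0 := by
        have happ : (∑ j ∈ s, g j • K j.1) (cat m.1) = 0 := by rw [hsum]; rfl
        rw [Finset.sum_apply'] at happ
        have hsingle : ∀ b ∈ s, b ≠ m → (g b • K b.1) (cat m.1) = 0 := by
          intro b _ hbm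
          have hKb : K b.1 (cat m.1) = 0 := by
            by_contra hKb
            have hgeW := hsupp b.1 (cat m.1) hKb
            have h1 : bin (cat b.1) ≤ bin (cat m.1) := geW_bin_le hgeW
            have h2 : bin (cat m.1) ≤ bin (cat b.1) := hmin b ‹b ∈ s›
            have : cat m.1 = cat b.1 := geW_bin_eq hgeW (le_antisymm h2 h1)
            exact hbm (Subtype.ext (hinj this.symm))
          rw [Finsupp.smul_apply, hKb, smul_zero]
        rw [Finset.sum_eq_single m hsingle (fun hms => absurd hm hms)] at happ
        rw [Finsupp.smul_apply, smul_eq_mul] at happ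
        rcases mul_eq_zero.mp happ with h | h
        · exact h
        · exact absurd h (hdiag m.1)
      by_cases him : i = m
      · rw [him]; exact hgm
      · have herase : (∑ j ∈ s.erase m, g j • K j.1) = 0 := by
          have h := Finset.add_sum_erase s (fun j => g j • K j.1) hm
          rw [hsum] at h
          simp only [hgm, zero_smul, zero_add] at h
          exact h
        exact ihs (s.erase m) (Finset.erase_ssubset hm) g herase i
          (Finset.mem_erase.mpr ⟨him, hi⟩)

lemma Kuv_linearIndependent_aux (u v : ℚ) (huv : (u, v) ≠ (0, 0)) :
    LinearIndependent ℚ (fun w : {l : List Bool // l ≠ []} => Kuv u v w.1) := by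
  by_cases hu : u = 0
  · subst hu
    have hv : v ≠ 0 := by
      intro hv
      exact huv (by rw [hv])
    apply indep_aux cat1 (fun h => cat1_inj h) (Kuv 0 v)
    · intro w x hx
      have h0 : NF 0 0 (⇑(Kuv 0 v w)) x ≠ 0 := hx
      have := GV v x 0 0 w h0
      exact this
    · exact fun w => Kuv0_diag_ne v hv w
  · apply indep_aux cat0 (fun h => cat0_inj h) (Kuv u v)
    · exact fun w x hx => lemA u v w x hx
    · intro w
      rw [lemB u v w]
      exact pow_ne_zero _ hu

/-- For `(u,v) ≠ (0,0)`, the family `K_{u,v}(w)`, indexed by nonempty words `w` over `{2,3}`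
(encoded with `false` = `2`, `true` = `3`), is linearly independent over `ℚ` in `A`:
the zinbiel subalgebra `C_{u,v}` is free on the two generators `z_2, z_3`. -/
theorem Kuv_linearIndependent (u v : ℚ) (huv : (u, v) ≠ (0, 0)) :
    LinearIndependent ℚ (fun w : {l : List Bool // l ≠ []} => Kuv u v w.1) := by
  exact Kuv_linearIndependent_aux u v huv
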